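/- For every integer n ≥ 1, the sum of the last parts over all Arndt compositions of n equals ⌊φⁿ⌋, where φ = (1+√5)/2; that is, d(n) = ⌊((1+√5)/2)ⁿ⌋. -/
import Mathlib


/-- `l` is a composition of `n`: a finite list of positive integers summing to `n`
(the empty list is the unique composition of `0`). -/
def IsComposition (n : ℕ) (l : List ℕ) : Prop :=
  (∀ x ∈ l, 0 < x) ∧ l.sum = n

/-- The Arndt condition: `σ_{2i-1} > σ_{2i}` (1-based) for every `i` with `2i ≤ ℓ`;
with 0-based indices, `l[2i] > l[2i+1]` whenever `2i+1 < l.length`. -/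
def IsArndt (l : List ℕ) : Prop :=
  ∀ i : ℕ, 2 * i + 1 < l.length → l.getD (2 * i + 1) 0 < l.getD (2 * i) 0

/-- `arndt n` is the number of Arndt compositions of `n`. -/
noncomputable def arndt (n : ℕ) : ℕ :=
  Set.ncard {l : List ℕ | IsComposition n l ∧ IsArndt l}

/-- `arndtParts n m` is the number of Arndt compositions of `n` with exactly `m` parts. -/
noncomputable def arndtParts (n m : ℕ) : ℕ :=
  Set.ncard {l : List ℕ | IsComposition n l ∧ IsArndt l ∧ l.length = m}

/-- The generalized binomial coefficient `C(a,b) = a(a-1)⋯(a-b+1)/b!` for an integer `a`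
and a natural number `b` (represented as a nonnegative integer); it is `0` for negative `b`. -/
def genChoose (a b : ℤ) : ℤ :=
  if 0 ≤ b then (∏ i ∈ Finset.range b.toNat, (a - (i : ℤ))) / (b.toNat.factorial : ℤ) else 0

/-- `lastSum n` is the sum of the last parts over all (nonempty) Arndt compositions of `n`
(the empty composition contributes `0`). -/
noncomputable def lastSum (n : ℕ) : ℕ :=
  ∑ᶠ l ∈ {l : List ℕ | IsComposition n l ∧ IsArndt l}, l.getLastD 0

def Luc : ℕ → ℕ
  | 0 => 2
  | 1 => 1
  | n+2 => Luc (n+1) + Luc n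

def tFun : ℕ → ℕ
  | 0 => 0
  | 1 => 1
  | 2 => 2
  | n+3 => tFun (n+2) + tFun (n+1) + (if Even n then 1 else 0)

theorem tFun_add_luc : ∀ n, 1 ≤ n → tFun n + (if Even n then 1 else 0) = Luc n := by
  intro n
  induction n using Nat.strong_induction_on with
  | _ n ih =>
    match n with
    | 0 => intro h; omega
    | 1 => intro _; decide
    | 2 => intro _; decide
    | (k+3) =>
      intro _
      have h1 := ih (k+2) (by omega) (by omega)
      have h2 := ih (k+1) (by omega) (by omega)
      have hL : Luc (k+3) = Luc (k+2) + Luc (k+1) := rfl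
      have ht : tFun (k+3) = tFun (k+2) + tFun (k+1) + (if Even k then 1 else 0) := rfl
      rcases Nat.even_or_odd k with he | ho
      · have e1 : ¬ Even (k+1) := by simp [Nat.even_add_one, he]
        have e2 : Even (k+2) := by simpa using he.add (by decide : Even 2)
        have e3 : ¬ Even (k+3) := by simp [Nat.even_add_one, e2]
        simp only [ht, hL, if_pos he, if_pos e2, if_neg e1, if_neg e3] at *
        omega
      · have e0 : ¬ Even k := Nat.not_even_iff_odd.mpr ho
        have e1 : Even (k+1) := by simpa [Nat.even_add_one] using e0
        have e2 : ¬ Even (k+2) := by simp [Nat.even_add_one, e1]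
        have e3 : Even (k+3) := by simpa [Nat.even_add_one] using e2
        simp only [ht, hL, if_neg e0, if_pos e1, if_neg e2, if_pos e3] at *
        omega

def TS (r : ℕ) : ℕ := ∑ j ∈ Finset.range r, tFun (j+1)

theorem TS_formula : ∀ r, TS r + 3 + r/2 = Luc (r+2) := by
  intro r
  induction r with
  | zero => decide
  | succ r ih =>
    have hs : TS (r+1) = TS r + tFun (r+1) := Finset.sum_range_succ _ _
    have ht := tFun_add_luc (r+1) (by omega)
    have hL : Luc (r+3) = Luc (r+2) + Luc (r+1) := rfl
    have hL' : Luc (r+1+2) = Luc (r+3) := rfl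
    rcases Nat.even_or_odd (r+1) with he | ho
    · rw [if_pos he] at ht
      have : (r+1) % 2 = 0 := Nat.even_iff.mp he
      omega
    · rw [if_neg (Nat.not_even_iff_odd.mpr ho)] at ht
      have : (r+1) % 2 = 1 := Nat.odd_iff.mp ho
      omega

def sB (n : ℕ) : ℕ := ∑ b ∈ Finset.Icc 1 ((n-1)/2), b

theorem sB_rec (n : ℕ) (hn : 3 ≤ n) : sB n = sB (n-2) + (n-1)/2 := by
  have h : (n-1)/2 = (n-3)/2 + 1 := by omega
  have h2 : (n-2-1)/2 = (n-3)/2 := by omega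
  unfold sB
  rw [h, h2, Finset.sum_Icc_succ_top (by omega)]

def C (n : ℕ) : ℕ := ∑ m ∈ Finset.range (n-3), ((m+2)/2) * tFun (n - m - 3)

theorem C_rec (n : ℕ) (hn : 5 ≤ n) : C n = C (n-2) + TS (n-3) := by
  have h1 : n - 3 = (n-5) + 1 + 1 := by omega
  unfold C
  rw [h1, Finset.sum_range_succ', Finset.sum_range_succ']
  have e0 : (0+2)/2 * tFun (n - 0 - 3) = tFun (n-3) := by norm_num
  have e1 : (0+1+2)/2 * tFun (n - (0+1) - 3) = tFun (n-4) := by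
    have : n - (0+1) - 3 = n - 4 := by omega
    rw [this]; norm_num
  rw [e0, e1]
  have e2 : ∀ i ∈ Finset.range (n-5), (i+1+1+2)/2 * tFun (n - (i+1+1) - 3)
      = (i+2)/2 * tFun (n - 2 - i - 3) + tFun (n - 5 - i) := by
    intro i hi
    rw [Finset.mem_range] at hi
    have ha : (i+1+1+2)/2 = (i+2)/2 + 1 := by omega
    have hb : n - (i+1+1) - 3 = n - 2 - i - 3 := by omega
    have hc : n - 2 - i - 3 = n - 5 - i := by omega
    rw [ha, hb, add_mul, one_mul, hc]
  rw [Finset.sum_congr rfl e2, Finset.sum_add_distrib]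
  have e3 : (∑ i ∈ Finset.range (n-5), tFun (n - 5 - i)) = TS (n-5) := by
    unfold TS
    rw [← Finset.sum_range_reflect (fun j => tFun (j+1)) (n-5)]
    apply Finset.sum_congr rfl
    intro i hi
    rw [Finset.mem_range] at hi
    congr 1
    omega
  rw [e3]
  have e5 : TS (n-3) = TS (n-5) + tFun (n-4) + tFun (n-3) := by
    unfold TS
    rw [h1, Finset.sum_range_succ, Finset.sum_range_succ]
    have h3 : n - 5 + 1 + 1 = n - 3 := by omega
    have h4 : n - 5 + 1 = n - 4 := by omega
    rw [h3, h4]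
  have e6 : n - 2 - 3 = n - 5 := by omega
  rw [e6, show (n-5)+1+1 = n-3 from h1.symm, e5]
  ring

theorem key_identity : ∀ n, 1 ≤ n → tFun n = n + C n + sB n := by
  intro n
  induction n using Nat.strong_induction_on with
  | _ n ih =>
    intro hn
    by_cases h5 : n < 5
    · interval_cases n <;> decide
    · push_neg at h5
      have ihn := ih (n-2) (by omega) (by omega)
      have hC := C_rec n (by omega)
      have hTS := TS_formula (n-3)
      have hTS' : Luc (n-3+2) = Luc (n-1) := by congr 1; omega
      have hsB := sB_rec n (by omega)
      have ht := tFun_add_luc n (by omega)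
      have ht2 := tFun_add_luc (n-2) (by omega)
      have hL : Luc n = Luc (n-1) + Luc (n-2) := by
        have hgen : ∀ m, Luc (m+2) = Luc (m+1) + Luc m := fun m => rfl
        have h := hgen (n-2)
        have ha : (n-2)+2 = n := by omega
        have hb : (n-2)+1 = n-1 := by omega
        rw [ha, hb] at h
        exact h
      rw [hTS'] at hTS
      rcases Nat.even_or_odd n with he | ho
      · have he2 : Even (n-2) := by
          rcases he with ⟨k, hk⟩; exact ⟨k-1, by omega⟩
        rw [if_pos he] at ht; rw [if_pos he2] at ht2
        omega
      · have ho2 : Odd (n-2) := by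
          rcases ho with ⟨k, hk⟩; exact ⟨k-1, by omega⟩
        rw [if_neg (Nat.not_even_iff_odd.mpr ho)] at ht
        rw [if_neg (Nat.not_even_iff_odd.mpr ho2)] at ht2
        omega

theorem isArndt_nil : IsArndt [] := by intro i hi; simp at hi

theorem isArndt_single (a : ℕ) : IsArndt [a] := by intro i hi; simp at hi

theorem getD_cons_cons (a b d k : ℕ) (l : List ℕ) : (a::b::l).getD (k+2) d = l.getD k d := rfl

theorem isArndt_cons_cons {a b : ℕ} {l : List ℕ} :
    IsArndt (a :: b :: l) ↔ b < a ∧ IsArndt l := by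
  constructor
  · intro h
    constructor
    · have := h 0 (by simp)
      simpa using this
    · intro i hi
      have h2 := h (i+1) (by simp; omega)
      have e1 : 2*(i+1)+1 = (2*i+1)+2 := by ring
      have e2 : 2*(i+1) = (2*i)+2 := by ring
      rw [e1, e2, getD_cons_cons, getD_cons_cons] at h2
      exact h2
  · rintro ⟨hba, hl⟩ i hi
    match i with
    | 0 => simpa using hba
    | (j+1) =>
      have e1 : 2*(j+1)+1 = (2*j+1)+2 := by ring
      have e2 : 2*(j+1) = (2*j)+2 := by ring
      rw [e1, e2, getD_cons_cons, getD_cons_cons]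
      apply hl
      simp at hi
      omega

def arndtF : ℕ → Finset (List ℕ) := fun n =>
  if h : n = 0 then {[]} else
    insert [n] (((Finset.range (n-2)).sigma (fun m => Finset.Icc 1 ((m+2)/2))).biUnion
      (fun p => (arndtF (n - (p.1 + 3))).image (fun l => (p.1 + 3 - p.2) :: p.2 :: l)))
  termination_by n => n
  decreasing_by omega

theorem arndtF_zero : arndtF 0 = {[]} := by rw [arndtF]; rfl

theorem mem_arndtF : ∀ n l, l ∈ arndtF n ↔ (IsComposition n l ∧ IsArndt l) := by
  intro n
  induction n using Nat.strong_induction_on with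
  | _ n ih =>
    intro l
    by_cases h0 : n = 0
    · subst h0
      rw [arndtF_zero]
      simp only [Finset.mem_singleton]
      constructor
      · rintro rfl
        exact ⟨⟨by simp, by simp⟩, isArndt_nil⟩
      · rintro ⟨⟨hpos, hsum⟩, _⟩
        match l with
        | [] => rfl
        | (x :: t) =>
          exfalso
          have := hpos x (by simp)
          simp at hsum
          omega
    · rw [arndtF]
      simp only [dif_neg h0, Finset.mem_insert, Finset.mem_biUnion, Finset.mem_sigma,
        Finset.mem_image, Finset.mem_range, Finset.mem_Icc]
      constructor
      · rintro (rfl | ⟨⟨m, b⟩, ⟨hm, hb1, hb2⟩, l', hl', rfl⟩)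
        · exact ⟨⟨by intro x hx; simp at hx; omega, by simp⟩, isArndt_single n⟩
        · replace hm : m < n - 2 := hm
          replace hb1 : 1 ≤ b := hb1
          replace hb2 : b ≤ (m+2)/2 := hb2
          have hrec := (ih (n - (m+3)) (by omega) l').mp hl'
          obtain ⟨⟨hpos, hsum⟩, harndt⟩ := hrec
          have hblt : b < m + 3 - b := by omega
          refine ⟨⟨?_, ?_⟩, ?_⟩
          · intro x hx
            simp at hx
            rcases hx with rfl | rfl | hx
            · omega
            · omega
            · exact hpos x hx
          · simp [hsum]
            omega
          · exact isArndt_cons_cons.mpr ⟨hblt, harndt⟩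
      · rintro ⟨⟨hpos, hsum⟩, harndt⟩
        match l with
        | [] => simp at hsum; omega
        | [a] =>
          left
          simp at hsum
          rw [hsum]
        | (a :: b :: l') =>
          right
          obtain ⟨hba, harndt'⟩ := isArndt_cons_cons.mp harndt
          have hb0 : 0 < b := hpos b (by simp)
          have ha0 : 0 < a := hpos a (by simp)
          have hsum' : a + (b + l'.sum) = n := by simpa using hsum
          refine ⟨⟨a + b - 3, b⟩, ⟨show a+b-3 < n-2 by omega, show 1 ≤ b by omega,
            show b ≤ (a+b-3+2)/2 by omega⟩, l', ?_, ?_⟩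
          · apply (ih (n - (a + b - 3 + 3)) (by omega) l').mpr
            refine ⟨⟨fun x hx => hpos x (by simp [hx]), by omega⟩, harndt'⟩
          · show (a + b - 3 + 3 - b) :: b :: l' = a :: b :: l'
            have : a + b - 3 + 3 - b = a := by omega
            rw [this]

def g (n : ℕ) : ℕ := ∑ l ∈ arndtF n, l.getLastD 0

theorem g_zero : g 0 = 0 := by rw [g, arndtF_zero]; rfl

theorem getLastD_cons_cons_of_ne (x y d : ℕ) (l : List ℕ) (h : l ≠ []) :
    (x :: y :: l).getLastD d = l.getLastD d := by
  match l, h with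
  | (c :: t), _ => simp [List.getLastD_cons]

theorem nonempty_of_mem_arndtF {m : ℕ} (hm : 1 ≤ m) {l : List ℕ} (hl : l ∈ arndtF m) :
    l ≠ [] := by
  obtain ⟨⟨_, hsum⟩, _⟩ := (mem_arndtF m l).mp hl
  intro h
  subst h
  simp at hsum
  omega

theorem g_rec (n : ℕ) (hn : 1 ≤ n) :
    g n = n + ∑ m ∈ Finset.range (n-2),
      (if m + 3 = n then sB n else ((m+2)/2) * g (n - m - 3)) := by
  rw [g, arndtF, dif_neg (by omega : ¬ n = 0)]
  rw [Finset.sum_insert]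
  · rw [show ([n] : List ℕ).getLastD 0 = n from rfl]
    congr 1
    rw [Finset.sum_biUnion]
    · rw [Finset.sum_sigma]
      apply Finset.sum_congr rfl
      intro m hm
      rw [Finset.mem_range] at hm
      by_cases hcase : m + 3 = n
      · rw [if_pos hcase]
        have h0 : n - (m + 3) = 0 := by omega
        have hIcc : (m+2)/2 = (n-1)/2 := by omega
        rw [sB, ← hIcc]
        apply Finset.sum_congr rfl
        intro b hb
        rw [Finset.mem_Icc] at hb
        rw [Finset.sum_image (by intro x _ y _ hxy; simpa using hxy)]
        rw [h0, arndtF_zero]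
        simp [List.getLastD_cons]
      · rw [if_neg hcase]
        have h1 : 1 ≤ n - (m + 3) := by omega
        have hsum : ∀ b ∈ Finset.Icc 1 ((m+2)/2),
            (∑ l ∈ Finset.image (fun l => (m + 3 - b) :: b :: l) (arndtF (n - (m + 3))),
              l.getLastD 0) = g (n - m - 3) := by
          intro b hb
          rw [Finset.sum_image (by intro x _ y _ hxy; simpa using hxy)]
          have : n - (m + 3) = n - m - 3 := by omega
          rw [this, g]
          apply Finset.sum_congr rfl
          intro l hl
          exact getLastD_cons_cons_of_ne _ _ _ _ (nonempty_of_mem_arndtF (by omega) hl)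
        rw [Finset.sum_congr rfl hsum, Finset.sum_const, Nat.card_Icc]
        simp [mul_comm]
    · -- pairwise disjoint
      intro p hp q hq hpq
      simp only [Finset.coe_sigma, Set.mem_sigma_iff] at hp hq
      apply Finset.disjoint_left.mpr
      intro l hlp hlq
      simp only [Finset.mem_image] at hlp hlq
      obtain ⟨x, hx, hx2⟩ := hlp
      obtain ⟨y, hy, hy2⟩ := hlq
      rw [← hx2] at hy2
      obtain ⟨m, b⟩ := p
      obtain ⟨m', b'⟩ := q
      simp only [List.cons.injEq] at hy2
      obtain ⟨h1, h2, h3⟩ := hy2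
      have hb : b ≤ (m+2)/2 := by
        have := hp.2
        rw [Finset.mem_coe, Finset.mem_Icc] at this
        exact this.2
      have hb' : b' ≤ (m'+2)/2 := by
        have := hq.2
        rw [Finset.mem_coe, Finset.mem_Icc] at this
        exact this.2
      apply hpq
      have hmm : m = m' := by omega
      subst hmm
      subst h2
      rfl
  · -- [n] not in the biUnion
    intro hmem
    rw [Finset.mem_biUnion] at hmem
    obtain ⟨p, _, hp⟩ := hmem
    rw [Finset.mem_image] at hp
    obtain ⟨l', _, hl'⟩ := hp
    simp at hl'

theorem g_eq_tFun : ∀ n, g n = tFun n := by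
  intro n
  induction n using Nat.strong_induction_on with
  | _ n ih =>
    by_cases h0 : n = 0
    · subst h0; rw [g_zero]; rfl
    · have h1 : 1 ≤ n := by omega
      rw [g_rec n h1]
      have hcong : ∀ m ∈ Finset.range (n-2),
          (if m + 3 = n then sB n else ((m+2)/2) * g (n - m - 3))
          = (if m + 3 = n then sB n else ((m+2)/2) * tFun (n - m - 3)) := by
        intro m hm
        rw [Finset.mem_range] at hm
        by_cases hc : m + 3 = n
        · rw [if_pos hc, if_pos hc]
        · rw [if_neg hc, if_neg hc, ih (n - m - 3) (by omega)]
      rw [Finset.sum_congr rfl hcong]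
      by_cases h3 : 3 ≤ n
      · rw [key_identity n h1, add_assoc]
        congr 1
        have h2 : n - 2 = (n-3) + 1 := by omega
        rw [h2, Finset.sum_range_succ, if_pos (by omega)]
        congr 1
        unfold C
        apply Finset.sum_congr rfl
        intro m hm
        rw [Finset.mem_range] at hm
        rw [if_neg (by omega)]
      · have hn12 : n = 1 ∨ n = 2 := by omega
        rcases hn12 with rfl | rfl <;> decide

/-- Real golden-ratio facts. -/
theorem luc_real : ∀ n : ℕ,
    (Luc n : ℝ) = ((1 + Real.sqrt 5)/2)^n + ((1 - Real.sqrt 5)/2)^n := by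
  have h5 : Real.sqrt 5 ^ 2 = 5 := Real.sq_sqrt (by norm_num)
  have hφ : ((1 + Real.sqrt 5)/2)^2 = ((1 + Real.sqrt 5)/2) + 1 := by
    field_simp
    nlinarith [h5]
  have hψ : ((1 - Real.sqrt 5)/2)^2 = ((1 - Real.sqrt 5)/2) + 1 := by
    field_simp
    nlinarith [h5]
  have step : ∀ (x : ℝ), x^2 = x + 1 → ∀ k : ℕ, x^(k+2) = x^(k+1) + x^k := by
    intro x hx k
    have h : x^(k+2) = x^k * x^2 := by ring
    rw [h, hx]
    ring
  intro n
  induction n using Nat.strong_induction_on with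
  | _ n ih =>
    match n with
    | 0 => norm_num [Luc]
    | 1 =>
      show ((1:ℕ) : ℝ) = _
      push_cast
      ring
    | (k+2) =>
      have e : Luc (k+2) = Luc (k+1) + Luc k := rfl
      rw [e]
      push_cast
      rw [ih (k+1) (by omega), ih k (by omega), step _ hφ k, step _ hψ k]
      ring

theorem sqrt5_bounds : 2 < Real.sqrt 5 ∧ Real.sqrt 5 < 3 := by
  have h5 : Real.sqrt 5 ^ 2 = 5 := Real.sq_sqrt (by norm_num)
  have hnn : 0 ≤ Real.sqrt 5 := Real.sqrt_nonneg 5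
  constructor <;> nlinarith

theorem floor_golden (n : ℕ) (hn : 1 ≤ n) :
    ⌊((1 + Real.sqrt 5)/2)^n⌋ = (Luc n : ℤ) - (if Even n then 1 else 0) := by
  set s := Real.sqrt 5
  have hb := sqrt5_bounds
  set ψ : ℝ := (1 - s)/2 with hψdef
  have hψ1 : -1 < ψ := by rw [hψdef]; linarith [hb.2]
  have hψ0 : ψ < 0 := by rw [hψdef]; linarith [hb.1]
  have habs : |ψ| < 1 := abs_lt.mpr ⟨hψ1, by linarith⟩
  have habsn : |ψ^n| < 1 := by
    rw [abs_pow]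
    calc |ψ|^n ≤ |ψ|^1 := pow_le_pow_of_le_one (abs_nonneg _) habs.le hn
    _ = |ψ| := pow_one _
    _ < 1 := habs
  have hL : ((1 + s)/2)^n = (Luc n : ℝ) - ψ^n := by
    have := luc_real n
    rw [hψdef]
    linarith [this]
  rcases Nat.even_or_odd n with he | ho
  · rw [if_pos he]
    have hpos : 0 < ψ^n := he.pow_pos (by linarith)
    rw [Int.floor_eq_iff]
    constructor
    · push_cast
      rw [hL]
      have : ψ^n ≤ |ψ^n| := le_abs_self _
      linarith
    · push_cast
      rw [hL]
      linarith
  · rw [if_neg (Nat.not_even_iff_odd.mpr ho)]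
    have hneg : ψ^n < 0 := ho.pow_neg hψ0
    rw [Int.floor_eq_iff]
    constructor
    · push_cast
      rw [hL]
      linarith
    · push_cast
      rw [hL]
      have : -ψ^n ≤ |ψ^n| := neg_le_abs _
      linarith

theorem lastSum_eq_g (n : ℕ) : lastSum n = g n := by
  unfold lastSum g
  have hset : {l : List ℕ | IsComposition n l ∧ IsArndt l} = ↑(arndtF n) := by
    ext l
    simp [mem_arndtF]
  rw [hset, finsum_mem_coe_finset]


/-- for `n ≥ 1`, `d(n) = ⌊φⁿ⌋` where `φ = (1+√5)/2`. -/
theorem lastSum_eq_floor_golden_pow (n : ℕ) (hn : 1 ≤ n) :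
    (lastSum n : ℤ) = ⌊((1 + Real.sqrt 5) / 2) ^ n⌋ := by
  rw [lastSum_eq_g, g_eq_tFun, floor_golden n hn]
  have ht := tFun_add_luc n hn
  rcases Nat.even_or_odd n with he | ho
  · rw [if_pos he] at ht ⊢
    push_cast
    omega
  · rw [if_neg (Nat.not_even_iff_odd.mpr ho)] at ht ⊢
    push_cast
    omega
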